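/- Let (E,‖·‖) be a complex Banach space and f̂ ∈ E[[x₁,x₂]] a formal power series. The following are equivalent: (i) f̂ is convergent; (ii) f̂∘π₁ is convergent; (iii) f̂∘π₂ is convergent. -/

import Mathlib

open Filter
open scoped Topology

noncomputable section

variable {E : Type*} [NormedAddCommGroup E] [NormedSpace ℂ E] [CompleteSpace E]

/-- A formal power series `Σ a n m x₁^n x₂^m ∈ E[[x₁,x₂]]` (given by its coefficients) is
convergent if `Σ ‖a n m‖ ρ^(n+m) < ∞` for some `ρ > 0`. -/
def PSConvergent (a : ℕ → ℕ → E) : Prop :=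
  ∃ ρ : ℝ, 0 < ρ ∧ Summable fun nm : ℕ × ℕ => ‖a nm.1 nm.2‖ * ρ ^ (nm.1 + nm.2)

/-- `s`-Gevrey in the monomial `x₁^p x₂^q` (coefficient characterization). -/
def MonomialGevrey (s : ℝ) (p q : ℕ) (a : ℕ → ℕ → E) : Prop :=
  ∃ C A : ℝ, 0 < C ∧ 0 < A ∧ ∀ n m : ℕ,
    ‖a n m‖ ≤ C * A ^ (n + m) *
      min ((n.factorial : ℝ) ^ (s / (p : ℝ))) ((m.factorial : ℝ) ^ (s / (q : ℝ)))

/-- The index set `{(m,j) | m < p ∨ j < q}` of the `(p,q)`-coefficient functions. -/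
def coeffIndex (p q : ℕ) : Set (ℕ × ℕ) := {mj | mj.1 < p ∨ mj.2 < q}

/-- The `(p,q)`-coefficient function `f_n(x₁,x₂) = Σ_{(m,j) : m<p ∨ j<q} a_{np+m,nq+j} x₁^m x₂^j`. -/
def coeffFn (a : ℕ → ℕ → E) (p q n : ℕ) (x : ℂ × ℂ) : E :=
  ∑' mj : coeffIndex p q, (x.1 ^ mj.1.1 * x.2 ^ mj.1.2) • a (n * p + mj.1.1) (n * q + mj.1.2)

/-- All the `(p,q)`-coefficient functions of `a` converge and define bounded holomorphic
maps on the polydisk of radius `r`. -/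
def CoeffFnGood (a : ℕ → ℕ → E) (p q : ℕ) (r : ℝ) : Prop :=
  ∀ n : ℕ,
    (∀ x : ℂ × ℂ, ‖x.1‖ < r → ‖x.2‖ < r →
      Summable fun mj : coeffIndex p q =>
        (x.1 ^ mj.1.1 * x.2 ^ mj.1.2) • a (n * p + mj.1.1) (n * q + mj.1.2)) ∧
    DifferentiableOn ℂ (coeffFn a p q n)
      {x : ℂ × ℂ | ‖x.1‖ < r ∧ ‖x.2‖ < r} ∧
    ∃ M : ℝ, ∀ x : ℂ × ℂ, ‖x.1‖ < r → ‖x.2‖ < r → ‖coeffFn a p q n x‖ ≤ M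

/-- The monomial sector `Π_{p,q}(a,b,r)`. -/
def MSector (p q : ℕ) (a b r : ℝ) : Set (ℂ × ℂ) :=
  {x | x.1 ≠ 0 ∧ x.2 ≠ 0 ∧ ‖x.1‖ ^ p < r ∧ ‖x.2‖ ^ q < r ∧
    ∃ θ : ℝ, a < θ ∧ θ < b ∧
      x.1 ^ p * x.2 ^ q = (‖x.1 ^ p * x.2 ^ q‖ : ℂ) * Complex.exp (θ * Complex.I)}

/-- `f` has the series `a` as `s`-Gevrey asymptotic expansion in `x₁^p x₂^q` on the
monomial sector `Π_{p,q}(a₀,b₀,r)`. -/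
def HasMAsymp (a : ℕ → ℕ → E) (s : ℝ) (p q : ℕ) (f : ℂ × ℂ → E) (a₀ b₀ r : ℝ) : Prop :=
  ∃ r' : ℝ, 0 < r' ∧ r' ≤ r ∧ CoeffFnGood a p q r' ∧
    ∀ a' b' ρ : ℝ, a₀ < a' → a' < b' → b' < b₀ → 0 < ρ → ρ < r' →
      ∃ C A : ℝ, 0 < C ∧ 0 < A ∧ ∀ N : ℕ, ∀ x ∈ MSector p q a' b' ρ,
        ‖f x - ∑ n ∈ Finset.range N, (x.1 ^ p * x.2 ^ q) ^ n • coeffFn a p q n x‖ ≤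
          C * A ^ N * (N.factorial : ℝ) ^ s * ‖x.1 ^ p * x.2 ^ q‖ ^ N

/-- `f` is a `k`-sum of the series `a` in the monomial `x₁^p x₂^q` in direction `d` :
it is holomorphic on a monomial sector bisected by `d` of opening `> π/k` and has `a`
as `(1/k)`-Gevrey asymptotic expansion in `x₁^p x₂^q` there. -/
def IsMSum (a : ℕ → ℕ → E) (k : ℝ) (p q : ℕ) (d : ℝ) (f : ℂ × ℂ → E) : Prop :=
  ∃ a₀ b₀ r : ℝ, Real.pi / k < b₀ - a₀ ∧ d = (a₀ + b₀) / 2 ∧ 0 < r ∧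
    DifferentiableOn ℂ f (MSector p q a₀ b₀ r) ∧ HasMAsymp a (1 / k) p q f a₀ b₀ r

/-- `k`-summability in the monomial `x₁^p x₂^q` in direction `d`. -/
def MSummableDir (a : ℕ → ℕ → E) (k : ℝ) (p q : ℕ) (d : ℝ) : Prop :=
  ∃ f : ℂ × ℂ → E, IsMSum a k p q d f

/-- `k`-summability in the monomial `x₁^p x₂^q` : summability in every direction outside
finitely many exceptional directions mod `2π`. -/
def MSummable (a : ℕ → ℕ → E) (k : ℝ) (p q : ℕ) : Prop :=
  ∃ D : Finset ℝ, ∀ d : ℝ, (∀ e ∈ D, ∀ m : ℤ, d ≠ e + 2 * Real.pi * m) →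
    MSummableDir a k p q d

/-- Coefficients of `f̂ ∘ π₁`, where `π₁(x₁,x₂) = (x₁x₂, x₂)`. -/
def blowCoeff₁ (a : ℕ → ℕ → E) : ℕ → ℕ → E := fun n m => if n ≤ m then a n (m - n) else 0

/-- Coefficients of `f̂ ∘ π₂`, where `π₂(x₁,x₂) = (x₁, x₁x₂)`. -/
def blowCoeff₂ (a : ℕ → ℕ → E) : ℕ → ℕ → E := fun n m => if m ≤ n then a (n - m) m else 0

/-- The sector `V(a,b,r)` in one variable. -/
def Sector1 (a b r : ℝ) : Set ℂ :=
  {x | x ≠ 0 ∧ ‖x‖ < r ∧ ∃ θ : ℝ, a < θ ∧ θ < b ∧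
    x = (‖x‖ : ℂ) * Complex.exp (θ * Complex.I)}

/-- `f` is a `k`-sum in the variable `x₁`, in direction `d`, of the series
`Σ c n (x₂) x₁ⁿ` with coefficients `c n` holomorphic and bounded on the disk `D_R`. -/
def IsSum1 (c : ℕ → ℂ → E) (R k d : ℝ) (f : ℂ → ℂ → E) : Prop :=
  ∃ a₀ b₀ r : ℝ, Real.pi / k < b₀ - a₀ ∧ d = (a₀ + b₀) / 2 ∧ 0 < r ∧
    DifferentiableOn ℂ (fun z : ℂ × ℂ => f z.1 z.2) (Sector1 a₀ b₀ r ×ˢ Metric.ball (0 : ℂ) R) ∧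
    ∀ a' b' r' : ℝ, a₀ < a' → a' < b' → b' < b₀ → 0 < r' → r' < r →
      ∃ C A : ℝ, 0 < C ∧ 0 < A ∧ ∀ N : ℕ, ∀ x₁ ∈ Sector1 a' b' r', ∀ x₂ ∈ Metric.ball (0 : ℂ) R,
        ‖f x₁ x₂ - ∑ n ∈ Finset.range N, x₁ ^ n • c n x₂‖ ≤
          C * A ^ N * (N.factorial : ℝ) ^ (1 / k) * ‖x₁‖ ^ N

/-- `k`-summability in the first variable, in direction `d`. -/
def Summable1Dir (c : ℕ → ℂ → E) (R k d : ℝ) : Prop := ∃ f, IsSum1 c R k d f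

/-- `k`-summability in the first variable : summability in every direction outside
finitely many exceptional directions mod `2π`. -/
def Summable1 (c : ℕ → ℂ → E) (R k : ℝ) : Prop :=
  ∃ D : Finset ℝ, ∀ d : ℝ, (∀ e ∈ D, ∀ m : ℤ, d ≠ e + 2 * Real.pi * m) →
    Summable1Dir c R k d

/-- The rows `x₂ ↦ Σ_m a n m x₂^m` of a double series. -/
def rowFn (a : ℕ → ℕ → E) (n : ℕ) (x : ℂ) : E := ∑' m : ℕ, x ^ m • a n m

/-- The columns `x₁ ↦ Σ_n a n m x₁^n` of a double series. -/
def colFn (a : ℕ → ℕ → E) (m : ℕ) (x : ℂ) : E := ∑' n : ℕ, x ^ n • a n m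

/-- Each row of `a` converges and defines a bounded (holomorphic) function on `D_r`. -/
def RowsGood (a : ℕ → ℕ → E) (r : ℝ) : Prop :=
  ∀ n : ℕ, (∀ x : ℂ, ‖x‖ < r → Summable fun m : ℕ => x ^ m • a n m) ∧
    ∃ M : ℝ, ∀ x : ℂ, ‖x‖ < r → ‖rowFn a n x‖ ≤ M

/-- Each column of `a` converges and defines a bounded (holomorphic) function on `D_r`. -/
def ColsGood (a : ℕ → ℕ → E) (r : ℝ) : Prop :=
  ∀ m : ℕ, (∀ x : ℂ, ‖x‖ < r → Summable fun n : ℕ => x ^ n • a n m) ∧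
    ∃ M : ℝ, ∀ x : ℂ, ‖x‖ < r → ‖colFn a m x‖ ≤ M

lemma blow_summable_iff₁ (a : ℕ → ℕ → E) (ρ : ℝ) :
    (Summable fun nm : ℕ × ℕ => ‖blowCoeff₁ a nm.1 nm.2‖ * ρ ^ (nm.1 + nm.2)) ↔
    Summable fun nm : ℕ × ℕ => ‖a nm.1 nm.2‖ * ρ ^ (nm.1 + (nm.1 + nm.2)) := by
  have hi : Function.Injective (fun p : ℕ × ℕ => ((p.1, p.1 + p.2) : ℕ × ℕ)) := by
    rintro ⟨a1, a2⟩ ⟨b1, b2⟩ h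
    simp only [Prod.mk.injEq] at h
    exact Prod.ext h.1 (by omega)
  have hz : ∀ x ∉ Set.range (fun p : ℕ × ℕ => ((p.1, p.1 + p.2) : ℕ × ℕ)),
      ‖blowCoeff₁ a x.1 x.2‖ * ρ ^ (x.1 + x.2) = 0 := by
    rintro ⟨n, m⟩ h
    have hnm : ¬ n ≤ m := by
      intro hle
      exact h ⟨(n, m - n), by simp [Prod.ext_iff]; omega⟩
    simp [blowCoeff₁, hnm]
  rw [← Function.Injective.summable_iff hi hz]
  apply summable_congr
  rintro ⟨n, m⟩
  simp [Function.comp, blowCoeff₁]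

lemma blow_summable_iff₂ (a : ℕ → ℕ → E) (ρ : ℝ) :
    (Summable fun nm : ℕ × ℕ => ‖blowCoeff₂ a nm.1 nm.2‖ * ρ ^ (nm.1 + nm.2)) ↔
    Summable fun nm : ℕ × ℕ => ‖a nm.1 nm.2‖ * ρ ^ ((nm.1 + nm.2) + nm.2) := by
  have hi : Function.Injective (fun p : ℕ × ℕ => ((p.1 + p.2, p.2) : ℕ × ℕ)) := by
    rintro ⟨a1, a2⟩ ⟨b1, b2⟩ h
    simp only [Prod.mk.injEq] at h
    exact Prod.ext (by omega) h.2
  have hz : ∀ x ∉ Set.range (fun p : ℕ × ℕ => ((p.1 + p.2, p.2) : ℕ × ℕ)),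
      ‖blowCoeff₂ a x.1 x.2‖ * ρ ^ (x.1 + x.2) = 0 := by
    rintro ⟨n, m⟩ h
    have hnm : ¬ m ≤ n := by
      intro hle
      exact h ⟨(n - m, m), by simp [Prod.ext_iff]; omega⟩
    simp [blowCoeff₂, hnm]
  rw [← Function.Injective.summable_iff hi hz]
  apply summable_congr
  rintro ⟨n, m⟩
  simp [Function.comp, blowCoeff₂]

/-- **Lemma.** `f̂` is convergent iff `f̂∘π₁` is convergent iff `f̂∘π₂` is convergent. -/
theorem psConvergent_blowup_iff (a : ℕ → ℕ → E) :
    (PSConvergent a ↔ PSConvergent (blowCoeff₁ a)) ∧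
    (PSConvergent a ↔ PSConvergent (blowCoeff₂ a)) := by
  constructor
  · constructor
    · rintro ⟨ρ, hρ, hs⟩
      set τ := min ρ 1 with hτdef
      have hτ : 0 < τ := lt_min hρ one_pos
      have hτρ : τ ≤ ρ := min_le_left _ _
      have hτ1 : τ ≤ 1 := min_le_right _ _
      refine ⟨τ, hτ, ?_⟩
      rw [blow_summable_iff₁]
      apply hs.of_nonneg_of_le
      · intro nm
        positivity
      · rintro ⟨n, m⟩
        have h1 : τ ^ (n + (n + m)) = τ ^ n * τ ^ (n + m) := by
          rw [← pow_add]
        have h2 : τ ^ n ≤ 1 := pow_le_one₀ hτ.le hτ1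
        have h3 : τ ^ (n + m) ≤ ρ ^ (n + m) := pow_le_pow_left₀ hτ.le hτρ _
        have h4 : τ ^ (n + (n + m)) ≤ ρ ^ (n + m) := by
          rw [h1]
          have h5 : τ ^ n * τ ^ (n + m) ≤ 1 * ρ ^ (n + m) := mul_le_mul h2 h3 (by positivity) one_pos.le
          linarith
        exact mul_le_mul_of_nonneg_left h4 (norm_nonneg _)
    · rintro ⟨ρ, hρ, hs⟩
      rw [blow_summable_iff₁] at hs
      set τ := min ρ 1 with hτdef
      have hτ : 0 < τ := lt_min hρ one_pos
      have hτρ : τ ≤ ρ := min_le_left _ _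
      have hτ1 : τ ≤ 1 := min_le_right _ _
      refine ⟨τ ^ 2, by positivity, ?_⟩
      apply hs.of_nonneg_of_le
      · intro nm
        positivity
      · rintro ⟨n, m⟩
        have h4 : (τ ^ 2) ^ (n + m) ≤ ρ ^ (n + (n + m)) := by
          have h1 : (τ ^ 2) ^ (n + m) = τ ^ (n + (n + m)) * τ ^ m := by
            rw [← pow_mul, ← pow_add]; ring_nf
          have h5 : τ ^ (n + (n + m)) * τ ^ m ≤ ρ ^ (n + (n + m)) * 1 := mul_le_mul (pow_le_pow_left₀ hτ.le hτρ _) (pow_le_one₀ hτ.le hτ1) (by positivity) (by positivity)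
          rw [h1]
          linarith
        exact mul_le_mul_of_nonneg_left h4 (norm_nonneg _)
  · constructor
    · rintro ⟨ρ, hρ, hs⟩
      set τ := min ρ 1 with hτdef
      have hτ : 0 < τ := lt_min hρ one_pos
      have hτρ : τ ≤ ρ := min_le_left _ _
      have hτ1 : τ ≤ 1 := min_le_right _ _
      refine ⟨τ, hτ, ?_⟩
      rw [blow_summable_iff₂]
      apply hs.of_nonneg_of_le
      · intro nm
        positivity
      · rintro ⟨n, m⟩
        have h1 : τ ^ ((n + m) + m) = τ ^ (n + m) * τ ^ m := by
          rw [← pow_add]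
        have h4 : τ ^ ((n + m) + m) ≤ ρ ^ (n + m) := by
          have h5 : τ ^ (n + m) * τ ^ m ≤ ρ ^ (n + m) * 1 := mul_le_mul (pow_le_pow_left₀ hτ.le hτρ _) (pow_le_one₀ hτ.le hτ1) (by positivity) (by positivity)
          rw [h1]
          linarith
        exact mul_le_mul_of_nonneg_left h4 (norm_nonneg _)
    · rintro ⟨ρ, hρ, hs⟩
      rw [blow_summable_iff₂] at hs
      set τ := min ρ 1 with hτdef
      have hτ : 0 < τ := lt_min hρ one_pos
      have hτρ : τ ≤ ρ := min_le_left _ _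
      have hτ1 : τ ≤ 1 := min_le_right _ _
      refine ⟨τ ^ 2, by positivity, ?_⟩
      apply hs.of_nonneg_of_le
      · intro nm
        positivity
      · rintro ⟨n, m⟩
        have h4 : (τ ^ 2) ^ (n + m) ≤ ρ ^ ((n + m) + m) := by
          have h1 : (τ ^ 2) ^ (n + m) = τ ^ ((n + m) + m) * τ ^ n := by
            rw [← pow_mul, ← pow_add]; ring_nf
          have h5 : τ ^ ((n + m) + m) * τ ^ n ≤ ρ ^ ((n + m) + m) * 1 := mul_le_mul (pow_le_pow_left₀ hτ.le hτρ _) (pow_le_one₀ hτ.le hτ1) (by positivity) (by positivity)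
          rw [h1]
          linarith
        exact mul_le_mul_of_nonneg_left h4 (norm_nonneg _)
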